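/- Let F : E × E → E be a coordinate retraction family that is C² on a neighborhood of (0, 0). Then there exist constants C > 0 and ε > 0 such that for all z, w, p ∈ E with ‖z‖ ≤ ε, ‖w‖ ≤ ε, ‖p‖ ≤ ε and F(z, w) = p, one has ‖w − (p − z)‖ ≤ C(‖z‖ + ‖p − z‖)‖p − z‖. In particular, the inverse retraction satisfies the first-order expansion R⁻¹_z(p) = (p − z) + O(‖p − z‖²) when z = O(‖p − z‖). -/

import Mathlib

/-- **First-order expansion of the inverse retraction.**
If `F` is a coordinate retraction family that is `C²` near `(0, 0)` and `w` is the inverse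
retraction of `p` at base point `z` (i.e. `F (z, w) = p`), then
`‖w - (p - z)‖ ≤ C (‖z‖ + ‖p - z‖) ‖p - z‖` for all small `z, w, p`. -/
theorem inverse_retraction_first_order_expansion
    {E : Type*} [NormedAddCommGroup E] [InnerProductSpace ℝ E] [FiniteDimensional ℝ E]
    (F : E × E → E)
    (hF : ContDiffAt ℝ 2 F (0, 0))
    (hF0 : ∀ᶠ z in nhds (0 : E), F (z, 0) = z)
    (hFid : fderiv ℝ (fun ζ : E => F (0, ζ)) 0 = ContinuousLinearMap.id ℝ E) :
    ∃ C > 0, ∃ ε > 0, ∀ z w p : E, ‖z‖ ≤ ε → ‖w‖ ≤ ε → ‖p‖ ≤ ε → F (z, w) = p →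
      ‖w - (p - z)‖ ≤ C * (‖z‖ + ‖p - z‖) * ‖p - z‖ := by
  classical
  set A := fderiv ℝ F (0, 0) with hA
  -- the derivative in the second variable at the origin is the identity
  have hAw : ∀ v : E, A (0, v) = v := by
    intro v
    have hFdiff : DifferentiableAt ℝ F ((0 : E), (0 : E)) :=
      hF.differentiableAt (by norm_num)
    have hinr : DifferentiableAt ℝ (fun ζ : E => ((0 : E), ζ)) 0 :=
      (ContinuousLinearMap.inr ℝ E E).differentiableAt
    have hinner : fderiv ℝ (fun ζ : E => ((0 : E), ζ)) 0
        = ContinuousLinearMap.inr ℝ E E := by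
      have hco : (fun ζ : E => ((0 : E), ζ)) = ⇑(ContinuousLinearMap.inr ℝ E E) := rfl
      rw [hco, ContinuousLinearMap.fderiv]
    have hcomp : fderiv ℝ (fun ζ : E => F (0, ζ)) 0
        = A.comp (ContinuousLinearMap.inr ℝ E E) := by
      have h := fderiv_comp (g := F) (f := fun ζ : E => ((0 : E), ζ)) (0 : E)
        hFdiff hinr
      rw [hinner] at h
      exact h
    have h2 : A.comp (ContinuousLinearMap.inr ℝ E E) = ContinuousLinearMap.id ℝ E :=
      hcomp ▸ hFid
    have := congrArg (fun L : E →L[ℝ] E => L v) h2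
    simpa using this
  -- Lipschitz bound for the derivative near the origin
  have hfd : ContDiffAt ℝ 1 (fderiv ℝ F) (0, 0) :=
    hF.fderiv_right (m := 1) (by norm_num)
  obtain ⟨K, t, ht, hLip⟩ := hfd.exists_lipschitzOnWith
  -- neighborhood of differentiability
  have hdiff : ∀ᶠ y in nhds ((0 : E), (0 : E)), DifferentiableAt ℝ F y := by
    filter_upwards [hF.eventually (by norm_num)] with y hy
    exact hy.differentiableAt (by norm_num)
  obtain ⟨δ, hδ0, hδ⟩ := Metric.mem_nhds_iff.1 (Filter.inter_mem ht hdiff)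
  obtain ⟨δ₂, hδ₂0, hδ₂⟩ := Metric.mem_nhds_iff.1 hF0
  set K' : ℝ := (K : ℝ) + 1 with hK'
  have hK'0 : (0 : ℝ) < K' := by positivity
  have hKK' : (K : ℝ) ≤ K' := by simp [hK']
  refine ⟨4 * K', by positivity, min (δ / 2) (min (δ₂ / 2) (1 / (4 * K'))), by positivity,
    ?_⟩
  intro z w p hz hw hp hzwp
  set ε : ℝ := min (δ / 2) (min (δ₂ / 2) (1 / (4 * K'))) with hε
  have hεδ : ε ≤ δ / 2 := min_le_left _ _
  have hεδ₂ : ε ≤ δ₂ / 2 := le_trans (min_le_right _ _) (min_le_left _ _)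
  have hεK : ε ≤ 1 / (4 * K') := le_trans (min_le_right _ _) (min_le_right _ _)
  -- points in play are in the ball of radius δ
  have h00 : (((0 : E), (0 : E)) : E × E) = 0 := rfl
  have hball : ∀ x : E × E, ‖x‖ ≤ ε → x ∈ Metric.ball ((0 : E), (0 : E)) δ := by
    intro x hx
    simp only [Metric.mem_ball, h00, dist_zero_right]
    calc ‖x‖ ≤ ε := hx
      _ ≤ δ / 2 := hεδ
      _ < δ := by linarith
  -- F (z, 0) = z
  have hz0 : F (z, 0) = z := by
    apply hδ₂
    simp only [Metric.mem_ball, dist_zero_right]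
    calc ‖z‖ ≤ ε := hz
      _ ≤ δ₂ / 2 := hεδ₂
      _ < δ₂ := by linarith
  -- mean value estimate on the segment from (z, 0) to (z, w)
  set s : Set (E × E) := segment ℝ ((z, 0) : E × E) (z, w) with hs
  have hnorm1 : ‖((z, 0) : E × E)‖ ≤ ε := by
    rw [Prod.norm_def]; simpa using hz
  have hnorm2 : ‖((z, w) : E × E)‖ ≤ ε := by
    rw [Prod.norm_def]; simp [max_le_iff, hz, hw]
  have hsub : s ⊆ Metric.closedBall (0 : E × E) ε := by
    apply (convex_closedBall (0 : E × E) ε).segment_subset <;>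
      simp only [Metric.mem_closedBall, dist_zero_right] <;> assumption
  have hsball : ∀ x ∈ s, x ∈ Metric.ball ((0 : E), (0 : E)) δ := by
    intro x hx
    exact hball x (by simpa [dist_eq_norm] using hsub hx)
  have hsd : ∀ x ∈ s, DifferentiableAt ℝ (fun y : E × E => F y - A y) x := by
    intro x hx
    exact ((hδ (hsball x hx)).2).sub (A.differentiableAt)
  have hbound : ∀ x ∈ s, ‖fderiv ℝ (fun y : E × E => F y - A y) x‖ ≤ (K : ℝ) * (‖z‖ + ‖w‖) := by
    intro x hx
    have hxd : DifferentiableAt ℝ F x := (hδ (hsball x hx)).2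
    have hfx : fderiv ℝ (fun y : E × E => F y - A y) x = fderiv ℝ F x - A := by
      rw [fderiv_fun_sub hxd A.differentiableAt, A.fderiv]
    rw [hfx]
    have hx0 : ((0 : E), (0 : E)) ∈ t := mem_of_mem_nhds ht
    have hxt : x ∈ t := (hδ (hsball x hx)).1
    have := hLip.dist_le_mul x hxt ((0 : E), (0 : E)) hx0
    rw [dist_eq_norm, dist_eq_norm, h00, sub_zero] at this
    calc ‖fderiv ℝ F x - A‖ ≤ (K : ℝ) * ‖x‖ := this
      _ ≤ (K : ℝ) * (‖z‖ + ‖w‖) := by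
          apply mul_le_mul_of_nonneg_left _ (K.coe_nonneg)
          have hxε : ‖x‖ ≤ max ‖z‖ ‖w‖ := by
            have hsub' : s ⊆ Metric.closedBall (0 : E × E) (max ‖z‖ ‖w‖) := by
              apply (convex_closedBall _ _).segment_subset <;>
                simp only [Metric.mem_closedBall, dist_zero_right, Prod.norm_def] <;>
                simp [max_le_iff, le_max_left, le_max_right, norm_nonneg]
            simpa [dist_eq_norm] using hsub' hx
          calc ‖x‖ ≤ max ‖z‖ ‖w‖ := hxε
            _ ≤ ‖z‖ + ‖w‖ := max_le (le_add_of_nonneg_right (norm_nonneg _))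
                (le_add_of_nonneg_left (norm_nonneg _))
  have hmv := Convex.norm_image_sub_le_of_norm_fderiv_le hsd hbound (convex_segment _ _)
    (left_mem_segment ℝ _ _) (right_mem_segment ℝ _ _)
  have hAdiff : A (z, w) - A (z, 0) = w := by
    rw [← A.map_sub]
    have : ((z, w) : E × E) - (z, 0) = (0, w) := by simp [Prod.ext_iff]
    rw [this, hAw]
  have hdiffval : (fun y : E × E => F y - A y) (z, w) - (fun y : E × E => F y - A y) (z, 0)
      = p - z - w := by
    show F (z, w) - A (z, w) - (F (z, 0) - A (z, 0)) = p - z - w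
    rw [hzwp, hz0, sub_sub_sub_comm, hAdiff]
  have hnw : ‖((z, w) : E × E) - (z, 0)‖ = ‖w‖ := by
    have : ((z, w) : E × E) - (z, 0) = (0, w) := by simp [Prod.ext_iff]
    rw [this, Prod.norm_def]; simp
  rw [hdiffval, hnw] at hmv
  -- key estimate
  have hkey : ‖w - (p - z)‖ ≤ (K : ℝ) * (‖z‖ + ‖w‖) * ‖w‖ := by
    rw [← norm_neg]; simpa [neg_sub] using hmv
  -- the coefficient is at most 1/2
  have hcoef : (K : ℝ) * (‖z‖ + ‖w‖) ≤ 1 / 2 := by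
    have h1 : ‖z‖ + ‖w‖ ≤ 2 * ε := by linarith
    have h2 : (K : ℝ) * (‖z‖ + ‖w‖) ≤ K' * (2 * ε) := by
      apply mul_le_mul hKK' h1 (by positivity) (le_of_lt hK'0)
    have h3 : K' * (2 * ε) ≤ K' * (2 * (1 / (4 * K'))) := by
      apply mul_le_mul_of_nonneg_left _ (le_of_lt hK'0)
      linarith
    have hne : K' ≠ 0 := ne_of_gt hK'0
    have h4 : K' * (2 * (1 / (4 * K'))) = 1 / 2 := by
      field_simp
      ring
    exact le_trans h2 (le_trans h3 (le_of_eq h4))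
  -- hence ‖w‖ ≤ 2 ‖p - z‖
  have hw2 : ‖w‖ ≤ 2 * ‖p - z‖ := by
    have h1 : ‖w‖ ≤ ‖p - z‖ + ‖w - (p - z)‖ := by
      have := norm_add_le (p - z) (w - (p - z))
      simpa using this
    have h2 : ‖w - (p - z)‖ ≤ (1 / 2) * ‖w‖ := by
      calc ‖w - (p - z)‖ ≤ (K : ℝ) * (‖z‖ + ‖w‖) * ‖w‖ := hkey
        _ ≤ (1 / 2) * ‖w‖ := by
            apply mul_le_mul_of_nonneg_right hcoef (norm_nonneg _)
    linarith
  -- conclude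
  have hznn : (0 : ℝ) ≤ ‖z‖ := norm_nonneg _
  have hwnn : (0 : ℝ) ≤ ‖w‖ := norm_nonneg _
  have hdnn : (0 : ℝ) ≤ ‖p - z‖ := norm_nonneg _
  have hKnn : (0 : ℝ) ≤ (K : ℝ) := K.coe_nonneg
  have e0 : (‖z‖ + ‖w‖) * ‖w‖ ≤ (‖z‖ + 2 * ‖p - z‖) * (2 * ‖p - z‖) :=
    mul_le_mul (by linarith) hw2 hwnn (by linarith)
  have e1 : (K : ℝ) * ((‖z‖ + ‖w‖) * ‖w‖)
      ≤ K' * ((‖z‖ + 2 * ‖p - z‖) * (2 * ‖p - z‖)) :=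
    mul_le_mul hKK' e0 (mul_nonneg (by linarith) hwnn) (le_of_lt hK'0)
  have hprod : 0 ≤ K' * (‖p - z‖ * ‖z‖) :=
    mul_nonneg (le_of_lt hK'0) (mul_nonneg hdnn hznn)
  have e2 : K' * ((‖z‖ + 2 * ‖p - z‖) * (2 * ‖p - z‖))
      ≤ 4 * K' * (‖z‖ + ‖p - z‖) * ‖p - z‖ := by
    have hring : 4 * K' * (‖z‖ + ‖p - z‖) * ‖p - z‖
        - K' * ((‖z‖ + 2 * ‖p - z‖) * (2 * ‖p - z‖)) = 2 * (K' * (‖p - z‖ * ‖z‖)) := by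
      ring
    linarith
  calc ‖w - (p - z)‖ ≤ (K : ℝ) * (‖z‖ + ‖w‖) * ‖w‖ := hkey
    _ = (K : ℝ) * ((‖z‖ + ‖w‖) * ‖w‖) := by ring
    _ ≤ K' * ((‖z‖ + 2 * ‖p - z‖) * (2 * ‖p - z‖)) := e1
    _ ≤ 4 * K' * (‖z‖ + ‖p - z‖) * ‖p - z‖ := e2
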